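/- Let L > 0, let a < b be real numbers, and let h : [a,b] → ℝ be an L-Lipschitz function (|h(x) − h(y)| ≤ L|x − y| for all x, y ∈ [a,b]). Fix t with 0 < t ≤ 1/(1+L) and x₀ ∈ [a,b], and define x_{n+1} = (1−t)·x_n + t·h(x_n) as long as x_n ∈ [a,b]. Then the resulting sequence is monotone, and either all iterates remain in [a,b] and the sequence converges to a fixed point of h, or some iterate exits the interval [a,b]. -/

import Mathlib

lemma stmt_3_aux (L a b t : ℝ) (hL : 0 < L) (h : ℝ → ℝ)
    (hlip : ∀ x ∈ Set.Icc a b, ∀ y ∈ Set.Icc a b, |h x - h y| ≤ L * |x - y|)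
    (ht0 : 0 < t)
    (x : ℕ → ℝ) (hall : ∀ n, x n ∈ Set.Icc a b)
    (hrec : ∀ n, x n ∈ Set.Icc a b → x (n + 1) = (1 - t) * x n + t * h (x n))
    (c : ℝ) (hc : Filter.Tendsto x Filter.atTop (nhds c)) :
    c ∈ Set.Icc a b ∧ h c = c := by
  have hcIcc : c ∈ Set.Icc a b := by
    constructor
    · exact ge_of_tendsto hc (Filter.Eventually.of_forall fun n => (hall n).1)
    · exact le_of_tendsto hc (Filter.Eventually.of_forall fun n => (hall n).2)
  refine ⟨hcIcc, ?_⟩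
  have htne : t ≠ 0 := ne_of_gt ht0
  have h1 : Filter.Tendsto (fun n => x (n + 1)) Filter.atTop (nhds c) :=
    hc.comp (Filter.tendsto_add_atTop_nat 1)
  have h2 : Filter.Tendsto (fun n => h (x n)) Filter.atTop (nhds c) := by
    have hcalc : Filter.Tendsto (fun n => (x (n + 1) - (1 - t) * x n) / t)
        Filter.atTop (nhds ((c - (1 - t) * c) / t)) :=
      (h1.sub (hc.const_mul (1 - t))).div_const t
    have heq : ((c - (1 - t) * c) / t) = c := by field_simp; ring
    rw [heq] at hcalc
    refine hcalc.congr fun n => ?_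
    rw [hrec n (hall n)]; field_simp; ring
  have h3 : Filter.Tendsto (fun n => h (x n)) Filter.atTop (nhds (h c)) := by
    rw [tendsto_iff_dist_tendsto_zero]
    have hd : Filter.Tendsto (fun n => dist (x n) c) Filter.atTop (nhds 0) :=
      tendsto_iff_dist_tendsto_zero.1 hc
    have hb : ∀ n, dist (h (x n)) (h c) ≤ L * dist (x n) c := by
      intro n
      have := hlip (x n) (hall n) c hcIcc
      simpa [Real.dist_eq] using this
    have hL0 : Filter.Tendsto (fun n => L * dist (x n) c) Filter.atTop (nhds 0) := by
      simpa using hd.const_mul L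
    exact squeeze_zero (fun n => dist_nonneg) hb hL0
  exact tendsto_nhds_unique h3 h2

/-- Krasnoselskii iteration for a non-self L-Lipschitz map on `[a,b]`:
the iterates (defined as long as they stay in `[a,b]`) form a monotone
sequence, and either all iterates remain in `[a,b]` and the sequence
converges to a fixed point of `h`, or some iterate exits `[a,b]`. -/
theorem stmt_3 (L a b t : ℝ) (hL : 0 < L) (hab : a < b) (h : ℝ → ℝ)
    (hlip : ∀ x ∈ Set.Icc a b, ∀ y ∈ Set.Icc a b, |h x - h y| ≤ L * |x - y|)
    (ht0 : 0 < t) (ht1 : t ≤ 1 / (1 + L))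
    (x : ℕ → ℝ) (hx0 : x 0 ∈ Set.Icc a b)
    (hrec : ∀ n, x n ∈ Set.Icc a b → x (n + 1) = (1 - t) * x n + t * h (x n)) :
    ((∀ i j : ℕ, i ≤ j → (∀ k < j, x k ∈ Set.Icc a b) → x i ≤ x j) ∨
      (∀ i j : ℕ, i ≤ j → (∀ k < j, x k ∈ Set.Icc a b) → x j ≤ x i)) ∧
      (((∀ n, x n ∈ Set.Icc a b) ∧
          ∃ c ∈ Set.Icc a b, h c = c ∧ Filter.Tendsto x Filter.atTop (nhds c)) ∨
        ∃ n, x n ∉ Set.Icc a b) := by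
  have hpos : (0:ℝ) < 1 + L := by linarith
  have ht1' : t * (1 + L) ≤ 1 := by
    have := (le_div_iff₀ hpos).mp ht1
    linarith
  have hgmono : ∀ u ∈ Set.Icc a b, ∀ v ∈ Set.Icc a b, u ≤ v →
      (1 - t) * u + t * h u ≤ (1 - t) * v + t * h v := by
    intro u hu v hv huv
    have h1 := hlip v hv u hu
    rw [abs_of_nonneg (by linarith : (0:ℝ) ≤ v - u)] at h1
    have h3 := abs_le.mp h1
    nlinarith [h3.1, h3.2]
  by_cases hdir : x 0 ≤ h (x 0)
  · -- nondecreasing case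
    have step : ∀ n, (∀ k < n + 1, x k ∈ Set.Icc a b) → x n ≤ x (n + 1) := by
      intro n
      induction n with
      | zero =>
        intro hk
        have h0 : x 0 ∈ Set.Icc a b := hk 0 (by norm_num)
        rw [hrec 0 h0]; nlinarith
      | succ n ih =>
        intro hk
        have hle : x n ≤ x (n + 1) := ih (fun k hkn => hk k (by omega))
        have hn : x n ∈ Set.Icc a b := hk n (by omega)
        have hn1 : x (n + 1) ∈ Set.Icc a b := hk (n + 1) (by omega)
        calc x (n + 1) = (1 - t) * x n + t * h (x n) := hrec n hn
          _ ≤ (1 - t) * x (n + 1) + t * h (x (n + 1)) := hgmono _ hn _ hn1 hle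
          _ = x (n + 2) := (hrec (n + 1) hn1).symm
    have chain : ∀ i j : ℕ, i ≤ j → (∀ k < j, x k ∈ Set.Icc a b) → x i ≤ x j := by
      intro i j hij
      induction j, hij using Nat.le_induction with
      | base => intro _; exact le_refl _
      | succ j hij ih =>
        intro hk
        have h1 : x i ≤ x j := ih (fun k hkj => hk k (by omega))
        have h2 : x j ≤ x (j + 1) := step j (fun k hkj => hk k (by omega))
        linarith
    refine ⟨Or.inl chain, ?_⟩
    by_cases hall : ∀ n, x n ∈ Set.Icc a b
    · left
      refine ⟨hall, ?_⟩
      have hmono : Monotone x :=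
        monotone_nat_of_le_succ fun n => step n (fun k _ => hall k)
      have hbdd : BddAbove (Set.range x) := ⟨b, by rintro y ⟨n, rfl⟩; exact (hall n).2⟩
      have hc : Filter.Tendsto x Filter.atTop (nhds (⨆ n, x n)) :=
        tendsto_atTop_ciSup hmono hbdd
      obtain ⟨hcIcc, hfix⟩ := stmt_3_aux L a b t hL h hlip ht0 x hall hrec _ hc
      exact ⟨_, hcIcc, hfix, hc⟩
    · right; push_neg at hall; exact hall
  · -- nonincreasing case
    push_neg at hdir
    have step : ∀ n, (∀ k < n + 1, x k ∈ Set.Icc a b) → x (n + 1) ≤ x n := by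
      intro n
      induction n with
      | zero =>
        intro hk
        have h0 : x 0 ∈ Set.Icc a b := hk 0 (by norm_num)
        rw [hrec 0 h0]; nlinarith
      | succ n ih =>
        intro hk
        have hle : x (n + 1) ≤ x n := ih (fun k hkn => hk k (by omega))
        have hn : x n ∈ Set.Icc a b := hk n (by omega)
        have hn1 : x (n + 1) ∈ Set.Icc a b := hk (n + 1) (by omega)
        calc x (n + 2) = (1 - t) * x (n + 1) + t * h (x (n + 1)) := hrec (n + 1) hn1
          _ ≤ (1 - t) * x n + t * h (x n) := hgmono _ hn1 _ hn hle
          _ = x (n + 1) := (hrec n hn).symm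
    have chain : ∀ i j : ℕ, i ≤ j → (∀ k < j, x k ∈ Set.Icc a b) → x j ≤ x i := by
      intro i j hij
      induction j, hij using Nat.le_induction with
      | base => intro _; exact le_refl _
      | succ j hij ih =>
        intro hk
        have h1 : x j ≤ x i := ih (fun k hkj => hk k (by omega))
        have h2 : x (j + 1) ≤ x j := step j (fun k hkj => hk k (by omega))
        linarith
    refine ⟨Or.inr chain, ?_⟩
    by_cases hall : ∀ n, x n ∈ Set.Icc a b
    · left
      refine ⟨hall, ?_⟩
      have hmono : Antitone x :=
        antitone_nat_of_succ_le fun n => step n (fun k _ => hall k)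
      have hbdd : BddBelow (Set.range x) := ⟨a, by rintro y ⟨n, rfl⟩; exact (hall n).1⟩
      have hc : Filter.Tendsto x Filter.atTop (nhds (⨅ n, x n)) :=
        tendsto_atTop_ciInf hmono hbdd
      obtain ⟨hcIcc, hfix⟩ := stmt_3_aux L a b t hL h hlip ht0 x hall hrec _ hc
      exact ⟨_, hcIcc, hfix, hc⟩
    · right; push_neg at hall; exact hall
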